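/- Let t ∈ ℝ^n with t ≠ 0, let F ∈ ℝ^{n×n} be symmetric positive definite, and suppose the block matrix S̃ = [[1, tᵀ],[t, F]] ∈ ℝ^{(n+1)×(n+1)} is positive definite. Set d = −F⁻¹ t and δ = 1 − dᵀ F d, so that 0 < δ < 1. Then for every x ∈ ℝ^n: (1, x)ᵀ S̃ (1, x) ≤ 1 if and only if (x − d)ᵀ ((1/(1−δ)) F) (x − d) ≤ 1. In other words, the set of x ∈ ℝ^n with (1, x) in the homogeneous (n+1)-dimensional ellipsoid defined by S̃ is exactly the non-homogeneous n-dimensional ellipsoid E(F/(1−δ), d). -/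

import Mathlib

open Matrix

theorem homogeneous_ellipsoid_eq_nonhomogeneous (n : ℕ) (t : Fin n → ℝ) (ht : t ≠ 0)
    (F : Matrix (Fin n) (Fin n) ℝ) (hFsymm : F.IsSymm) (hFpd : F.PosDef)
    (St : Matrix (Unit ⊕ Fin n) (Unit ⊕ Fin n) ℝ)
    (hSt : St = Matrix.fromBlocks (Matrix.of fun _ _ => (1 : ℝ)) (Matrix.replicateRow Unit t)
      (Matrix.replicateCol Unit t) F)
    (hStpd : St.PosDef)
    (d : Fin n → ℝ) (hd : d = -(F⁻¹.mulVec t))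
    (δ : ℝ) (hδ : δ = 1 - d ⬝ᵥ F.mulVec d) (hδ01 : 0 < δ ∧ δ < 1) :
    ∀ x : Fin n → ℝ,
      (Sum.elim (fun _ => (1 : ℝ)) x) ⬝ᵥ St.mulVec (Sum.elim (fun _ => (1 : ℝ)) x) ≤ 1 ↔
      (x - d) ⬝ᵥ ((1 / (1 - δ)) • F).mulVec (x - d) ≤ 1 := by
  intro x
  have hFunit : IsUnit F.det := isUnit_iff_ne_zero.mpr hFpd.det_pos.ne'
  have hFd : F.mulVec d = -t := by
    rw [hd, Matrix.mulVec_neg, Matrix.mulVec_mulVec, Matrix.mul_nonsing_inv F hFunit,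
      Matrix.one_mulVec]
  have hsymm : ∀ u v : Fin n → ℝ, u ⬝ᵥ F.mulVec v = (F.mulVec u) ⬝ᵥ v := by
    intro u v
    rw [Matrix.dotProduct_mulVec, ← Matrix.mulVec_transpose, hFsymm]
  have hdFd : d ⬝ᵥ F.mulVec d = 1 - δ := by linarith [hδ]
  have hL : (Sum.elim (fun _ => (1 : ℝ)) x) ⬝ᵥ St.mulVec (Sum.elim (fun _ => (1 : ℝ)) x)
      = 1 + t ⬝ᵥ x + (x ⬝ᵥ t + x ⬝ᵥ F.mulVec x) := by
    subst hSt
    rw [Matrix.fromBlocks_mulVec, Sum.elim_comp_inl, Sum.elim_comp_inr,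
      sumElim_dotProduct_sumElim, dotProduct_add, dotProduct_add]
    simp [Matrix.mulVec, dotProduct]
  have hQ : (x - d) ⬝ᵥ F.mulVec (x - d) = x ⬝ᵥ F.mulVec x + x ⬝ᵥ t + t ⬝ᵥ x + (1 - δ) := by
    have hdt : d ⬝ᵥ (-t) = 1 - δ := by rw [← hFd]; exact hdFd
    rw [Matrix.mulVec_sub, dotProduct_sub, sub_dotProduct,
      sub_dotProduct, hsymm d x, hFd, hdt]
    simp [neg_dotProduct, dotProduct_neg]
    ring
  have hR : (x - d) ⬝ᵥ ((1 / (1 - δ)) • F).mulVec (x - d)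
      = (1 / (1 - δ)) * (x ⬝ᵥ F.mulVec x + x ⬝ᵥ t + t ⬝ᵥ x + (1 - δ)) := by
    rw [Matrix.smul_mulVec, dotProduct_smul, hQ, smul_eq_mul]
  have h1δ : 0 < 1 - δ := by linarith [hδ01.2]
  rw [hL, hR]
  rw [div_mul_eq_mul_div, one_mul, div_le_one h1δ]
  constructor <;> intro h <;> linarith
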